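/- Let A be a nonnegative n×n matrix with Perron eigenvector x, ∑ᵢ xᵢ = 1, and suppose either (for all i,j,k: x_k < x_j implies a_{i,k} ≤ a_{i,j}) or (for all i,j,k: x_k < x_j implies a_{i,k} ≥ a_{i,j}). Then the equalities (1/n)∑_j a_{i,j} = ρ(A)·x_i for all i hold if and only if either x_i = 1/n for all i, or every row of A is constant (for each i there is c_i with a_{i,j} = c_i for all j). -/
import Mathlib


open Matrix Finset

/-- The Perron root: the largest nonnegative real eigenvalue of a matrix. -/
noncomputable def perronRoot {n : ℕ} (A : Matrix (Fin n) (Fin n) ℝ) : ℝ :=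
  sSup {r : ℝ | 0 ≤ r ∧ ∃ v : Fin n → ℝ, v ≠ 0 ∧ A.mulVec v = r • v}

/-- Ω(A): matrices obtained by permuting the entries within each row of A independently. -/
def Omega {n : ℕ} (A : Matrix (Fin n) (Fin n) ℝ) : Set (Matrix (Fin n) (Fin n) ℝ) :=
  {B | ∀ i, ∃ φ : Equiv.Perm (Fin n), ∀ j, B i j = A i (φ j)}

/-- Irreducibility: the directed graph of the matrix is strongly connected. -/
def Irred {n : ℕ} (A : Matrix (Fin n) (Fin n) ℝ) : Prop :=
  ∀ i j, ∃ m : ℕ, 0 < m ∧ 0 < (A ^ m) i j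

private lemma aux_sum_zero {n : ℕ} (f : Fin n → Fin n → ℝ) (h : ∀ j k, 0 ≤ f j k) :
    (∑ j, ∑ k, f j k) = 0 ↔ ∀ j k, f j k = 0 := by
  rw [Finset.sum_eq_zero_iff_of_nonneg (fun j _ => Finset.sum_nonneg fun k _ => h j k)]
  constructor
  · intro H j k
    exact (Finset.sum_eq_zero_iff_of_nonneg (fun k _ => h j k)).mp
      (H j (Finset.mem_univ j)) k (Finset.mem_univ k)
  · intro H j _
    exact Finset.sum_eq_zero fun k _ => H j k

theorem stmt9 {n : ℕ} (hn : 0 < n) (A : Matrix (Fin n) (Fin n) ℝ) (hA : ∀ i j, 0 ≤ A i j)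
    (x : Fin n → ℝ) (hx : ∀ i, 0 ≤ x i) (heig : A.mulVec x = perronRoot A • x)
    (hsum : ∑ i, x i = 1)
    (hmono : (∀ i j k, x k < x j → A i k ≤ A i j) ∨ (∀ i j k, x k < x j → A i j ≤ A i k)) :
    (∀ i, (∑ j, A i j) / n = perronRoot A * x i) ↔
      ((∀ i, x i = 1 / n) ∨ (∀ i, ∃ c, ∀ j, A i j = c)) := by
  have hn' : (n : ℝ) ≠ 0 := Nat.cast_ne_zero.mpr hn.ne'
  have heig' : ∀ i, ∑ j, A i j * x j = perronRoot A * x i := by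
    intro i
    have := congrFun heig i
    simpa [Matrix.mulVec, dotProduct] using this
  have hS : ∀ i, ∑ j, ∑ k, (A i j - A i k) * (x j - x k)
      = 2 * ((n : ℝ) * (perronRoot A * x i)) - 2 * ∑ j, A i j := by
    intro i
    have h1 : ∑ j, ∑ k, (A i j - A i k) * (x j - x k)
        = ∑ j, ((n : ℝ) * (A i j * x j) - A i j * (∑ k, x k)
            - (∑ k, A i k) * x j + ∑ k, A i k * x k) := by
      refine Finset.sum_congr rfl fun j _ => ?_
      rw [Finset.sum_congr rfl (fun k _ => by ring :
        ∀ k ∈ Finset.univ, (A i j - A i k) * (x j - x k)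
          = A i j * x j - A i j * x k - A i k * x j + A i k * x k)]
      simp only [Finset.sum_add_distrib, Finset.sum_sub_distrib, Finset.sum_const,
        Finset.card_univ, Fintype.card_fin, nsmul_eq_mul, ← Finset.mul_sum, ← Finset.sum_mul]
    rw [h1]
    simp only [Finset.sum_add_distrib, Finset.sum_sub_distrib, Finset.sum_const,
      Finset.card_univ, Fintype.card_fin, nsmul_eq_mul, ← Finset.mul_sum, ← Finset.sum_mul,
      hsum, heig' i]
    ring
  have key : ∀ i, ((∑ j, A i j) / n = perronRoot A * x i ↔
      ∀ j k, (A i j - A i k) * (x j - x k) = 0) := by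
    intro i
    have hiff : (∑ j, A i j) / n = perronRoot A * x i ↔
        ∑ j, ∑ k, (A i j - A i k) * (x j - x k) = 0 := by
      rw [div_eq_iff hn', hS i]
      constructor
      · intro h; nlinarith [h]
      · intro h; nlinarith [h]
    rw [hiff]
    rcases hmono with hm | hm
    · refine aux_sum_zero _ fun j k => ?_
      rcases lt_trichotomy (x k) (x j) with h | h | h
      · exact mul_nonneg (sub_nonneg.mpr (hm i j k h)) (sub_nonneg.mpr h.le)
      · simp [h]
      · have := mul_nonneg (neg_nonneg.mpr (sub_nonpos.mpr (hm i k j h)))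
          (neg_nonneg.mpr (sub_nonpos.mpr h.le))
        have h' : (A i k - A i j) * (x k - x j) = (A i j - A i k) * (x j - x k) := by ring
        simpa [neg_mul_neg, h'] using this
    · have h2 := aux_sum_zero (fun j k => -((A i j - A i k) * (x j - x k)))
        (fun j k => by
          rcases lt_trichotomy (x k) (x j) with h | h | h
          · exact neg_nonneg.mpr (mul_nonpos_of_nonpos_of_nonneg
              (sub_nonpos.mpr (hm i j k h)) (sub_nonneg.mpr h.le))
          · simp [h]
          · exact neg_nonneg.mpr (mul_nonpos_of_nonneg_of_nonpos
              (sub_nonneg.mpr (hm i k j h)) (sub_nonpos.mpr h.le)))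
      constructor
      · intro h
        have h0 : ∑ j, ∑ k, -((A i j - A i k) * (x j - x k)) = 0 := by
          simp only [Finset.sum_neg_distrib, h, neg_zero]
        intro j k
        simpa [neg_eq_zero] using h2.mp h0 j k
      · intro h
        exact Finset.sum_eq_zero fun j _ => Finset.sum_eq_zero fun k _ => h j k
  have final : (∀ i, ∀ j k, (A i j - A i k) * (x j - x k) = 0) ↔
      ((∀ i, x i = 1 / n) ∨ (∀ i, ∃ c, ∀ j, A i j = c)) := by
    constructor
    · intro h
      by_cases hxc : ∀ j k : Fin n, x j = x k
      · left
        intro i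
        have hni : (n : ℝ) * x i = 1 := by
          rw [← hsum, Finset.sum_congr rfl fun j _ => hxc j i]
          simp [Finset.sum_const, Finset.card_univ, mul_comm]
        field_simp
        linarith
      · right
        push_neg at hxc
        obtain ⟨p, q, hpq⟩ := hxc
        have eq_of_ne : ∀ i a b, x a ≠ x b → A i a = A i b := by
          intro i a b hab
          rcases mul_eq_zero.mp (h i a b) with h' | h'
          · exact sub_eq_zero.mp h'
          · exact absurd (sub_eq_zero.mp h') hab
        intro i
        refine ⟨A i p, fun j => ?_⟩
        by_cases hjp : x j = x p
        · have hjq : x j ≠ x q := by rw [hjp]; exact hpq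
          have hpq' : x p ≠ x q := hpq
          rw [eq_of_ne i j q hjq, eq_of_ne i p q hpq']
        · exact eq_of_ne i j p hjp
    · intro h i j k
      rcases h with h | h
      · have : x j = x k := by rw [h j, h k]
        simp [this]
      · obtain ⟨c, hc⟩ := h i
        simp [hc j, hc k]
  exact (forall_congr' key).trans final
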